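/- Assume p·q = 0 and q ≠ 0. Then the absolute BRST cohomology of Ab(p,q) at ghost number one is one-dimensional, spanned by the class of q·A_0 = q₀A_0^0 + q₁A_0^1, and at ghost number two it is one-dimensional, spanned by the class of c₀(q·A_0) + 4B_0 (in particular this state is Q-closed because Q(c₀ q·A_0) = −4 q·A_1 = −4 Q B_0, and it is not Q-exact). -/

import Mathlib

/-!
Massless relative BRST complex of the N=2 string in the (−1,0) picture.

Basis: for each N ≥ 0, `A N 0`, `A N 1` in degree 2N+1 and `B N`, `C N` in
degree 2N+2.  Momenta `p q : Fin 2 → ℂ` correspond to (p⁰,p¹) and (q₀,q₁).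
The BRST differential acts by
  Q A_N^0 = 2p⁰ B_N − q₁ C_N,
  Q A_N^1 = 2p¹ B_N + q₀ C_N,
  Q B_N   = q₀ A_{N+1}^0 + q₁ A_{N+1}^1,
  Q C_N   = 2p⁰ A_{N+1}^1 − 2p¹ A_{N+1}^0.
-/

/-- Basis of the relative complex `R(p,q)`. -/
inductive RB where
  | A : ℕ → Fin 2 → RB
  | B : ℕ → RB
  | C : ℕ → RB

/-- The underlying vector space of the complex `R(p,q)`: formal ℂ-linear
combinations of basis vectors. -/
abbrev RSpace : Type := RB →₀ ℂ

/-- The ghost-number degree of a basis vector. -/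
def RB.deg : RB → ℤ
  | .A N _ => 2 * (N : ℤ) + 1
  | .B N => 2 * (N : ℤ) + 2
  | .C N => 2 * (N : ℤ) + 2

/-- The degree-`g` graded piece `R^g` (the span of the basis vectors of
degree `g`); it is `0` for `g ≤ 0`. -/
noncomputable def Rdeg (g : ℤ) : Submodule ℂ RSpace :=
  Finsupp.supported ℂ ℂ {b : RB | RB.deg b = g}

open Finsupp in
/-- The BRST differential `Q` of `R(p,q)`. -/
noncomputable def Qmap (p q : Fin 2 → ℂ) : RSpace →ₗ[ℂ] RSpace :=
  Finsupp.lift RSpace ℂ RB fun b => match b with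
    | .A N μ =>
        (2 * p μ) • single (RB.B N) (1 : ℂ)
          + (if μ = 0 then -(q 1) else q 0) • single (RB.C N) (1 : ℂ)
    | .B N =>
        q 0 • single (RB.A (N + 1) 0) (1 : ℂ)
          + q 1 • single (RB.A (N + 1) 1) (1 : ℂ)
    | .C N =>
        (2 * p 0) • single (RB.A (N + 1) 1) (1 : ℂ)
          - (2 * p 1) • single (RB.A (N + 1) 0) (1 : ℂ)

/-- The state `q·A_N = q₀ A_N^0 + q₁ A_N^1`. -/
noncomputable def qA (q : Fin 2 → ℂ) (N : ℕ) : RSpace :=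
  q 0 • Finsupp.single (RB.A N 0) (1 : ℂ) + q 1 • Finsupp.single (RB.A N 1) (1 : ℂ)

/-- Degree-`g` cocycles: `ker Q ∩ R^g`. -/
noncomputable def Zg (p q : Fin 2 → ℂ) (g : ℤ) : Submodule ℂ RSpace :=
  Rdeg g ⊓ LinearMap.ker (Qmap p q)

/-- Degree-`g` coboundaries: `Q(R^{g-1})`. -/
noncomputable def Bg (p q : Fin 2 → ℂ) (g : ℤ) : Submodule ℂ RSpace :=
  (Rdeg (g - 1)).map (Qmap p q)

/-- The relative BRST cohomology `H^g(R(p,q)) = (ker Q ∩ R^g)/Q(R^{g-1})`,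
realised as the image of the cocycles `Z^g` in the quotient of the whole space
by the coboundaries `B^g = Q(R^{g-1})`. -/
noncomputable def Hco (p q : Fin 2 → ℂ) (g : ℤ) :
    Submodule ℂ (RSpace ⧸ Bg p q g) :=
  (Zg p q g).map (Bg p q g).mkQ
/-!
The absolute complex `Ab(p,q) := R ⊕ c₀R`.  An element is a pair `(x, y)`
representing `x + c₀ y` with `x, y ∈ R`.  The degree-`g` part is
`R^g ⊕ c₀ R^{g-1}`.  The shift operator `S` has degree `+2` and sends each
basis vector at level `N` to the corresponding one at level `N+1`, and the
differential is extended by `Q(c₀ y) = −4 S y − c₀ (Q y)`.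
-/

/-- The level shift `N ↦ N + 1` on basis vectors. -/
def RB.shift : RB → RB
  | .A N μ => .A (N + 1) μ
  | .B N => .B (N + 1)
  | .C N => .C (N + 1)

/-- The degree `+2` map `S` with `S A_N^μ = A_{N+1}^μ`, `S B_N = B_{N+1}`,
`S C_N = C_{N+1}`. -/
noncomputable def Smap : RSpace →ₗ[ℂ] RSpace :=
  Finsupp.lmapDomain ℂ ℂ RB.shift

/-- The underlying space of the absolute complex `Ab(p,q) = R ⊕ c₀R`:
the pair `(x, y)` represents `x + c₀ y`. -/
abbrev AbSpace : Type := RSpace × RSpace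

/-- The degree-`g` graded piece `Ab^g = R^g ⊕ c₀ R^{g-1}`. -/
noncomputable def AbDeg (g : ℤ) : Submodule ℂ AbSpace :=
  (Rdeg g).prod (Rdeg (g - 1))

/-- The BRST differential on the absolute complex:
`Q (x + c₀ y) = (Q x − 4 S y) − c₀ (Q y)`. -/
noncomputable def QAb (p q : Fin 2 → ℂ) : AbSpace →ₗ[ℂ] AbSpace :=
  LinearMap.prod
    ((Qmap p q) ∘ₗ (LinearMap.fst ℂ RSpace RSpace)
      - (4 : ℂ) • (Smap ∘ₗ (LinearMap.snd ℂ RSpace RSpace)))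
    (- ((Qmap p q) ∘ₗ (LinearMap.snd ℂ RSpace RSpace)))

/-- Degree-`g` cocycles of the absolute complex. -/
noncomputable def AbZ (p q : Fin 2 → ℂ) (g : ℤ) : Submodule ℂ AbSpace :=
  AbDeg g ⊓ LinearMap.ker (QAb p q)

/-- Degree-`g` coboundaries of the absolute complex: `Q(Ab^{g-1})`. -/
noncomputable def AbB (p q : Fin 2 → ℂ) (g : ℤ) : Submodule ℂ AbSpace :=
  (AbDeg (g - 1)).map (QAb p q)

/-- The absolute BRST cohomology
`H^g(Ab(p,q)) = (ker Q ∩ Ab^g)/Q(Ab^{g-1})`, realised as the image of the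
cocycles in the quotient by the coboundaries. -/
noncomputable def HAb (p q : Fin 2 → ℂ) (g : ℤ) :
    Submodule ℂ (AbSpace ⧸ AbB p q g) :=
  (AbZ p q g).map (AbB p q g).mkQ

/-! ### Auxiliary lemmas -/

deriving instance DecidableEq for RB

open Finsupp

lemma QA0 (p q : Fin 2 → ℂ) (N : ℕ) :
    Qmap p q (single (RB.A N 0) 1) =
      (2 * p 0) • single (RB.B N) (1 : ℂ) + (-(q 1)) • single (RB.C N) (1 : ℂ) := by
  simp [Qmap, Finsupp.lift_apply, Finsupp.sum_single_index]

lemma QA1 (p q : Fin 2 → ℂ) (N : ℕ) :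
    Qmap p q (single (RB.A N 1) 1) =
      (2 * p 1) • single (RB.B N) (1 : ℂ) + (q 0) • single (RB.C N) (1 : ℂ) := by
  simp [Qmap, Finsupp.lift_apply, Finsupp.sum_single_index]

lemma QB (p q : Fin 2 → ℂ) (N : ℕ) :
    Qmap p q (single (RB.B N) 1) =
      q 0 • single (RB.A (N + 1) 0) (1 : ℂ) + q 1 • single (RB.A (N + 1) 1) (1 : ℂ) := by
  simp [Qmap, Finsupp.lift_apply, Finsupp.sum_single_index]

lemma QC (p q : Fin 2 → ℂ) (N : ℕ) :
    Qmap p q (single (RB.C N) 1) =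
      (2 * p 0) • single (RB.A (N + 1) 1) (1 : ℂ)
        - (2 * p 1) • single (RB.A (N + 1) 0) (1 : ℂ) := by
  simp [Qmap, Finsupp.lift_apply, Finsupp.sum_single_index]

lemma S_single (b : RB) : Smap (single b (1 : ℂ)) = single b.shift 1 := by
  simp [Smap, Finsupp.lmapDomain_apply, Finsupp.mapDomain_single]

lemma S_qA (q : Fin 2 → ℂ) (N : ℕ) : Smap (qA q N) = qA q (N + 1) := by
  rw [qA, qA, map_add, map_smul, map_smul, S_single, S_single]; rfl

lemma QB_eq_qA (p q : Fin 2 → ℂ) (N : ℕ) :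
    Qmap p q (single (RB.B N) 1) = qA q (N + 1) := by
  rw [QB, qA]

lemma Q_one (p q : Fin 2 → ℂ) (a b : ℂ) :
    Qmap p q (a • single (RB.A 0 0) (1 : ℂ) + b • single (RB.A 0 1) 1)
      = (2 * a * p 0 + 2 * b * p 1) • single (RB.B 0) (1 : ℂ)
        + (b * q 0 - a * q 1) • single (RB.C 0) 1 := by
  rw [map_add, map_smul, map_smul, QA0, QA1]
  match_scalars <;> ring

lemma Q_qA (p q : Fin 2 → ℂ) (h : p 0 * q 0 + p 1 * q 1 = 0) (N : ℕ) :
    Qmap p q (qA q N) = 0 := by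
  rw [qA, map_add, map_smul, map_smul, QA0, QA1]
  have : (q 0 * (2 * p 0) + q 1 * (2 * p 1)) • single (RB.B N) (1 : ℂ)
      + (q 0 * (-(q 1)) + q 1 * q 0) • single (RB.C N) (1 : ℂ)
      = q 0 • ((2 * p 0) • single (RB.B N) (1 : ℂ) + (-(q 1)) • single (RB.C N) (1 : ℂ))
        + q 1 • ((2 * p 1) • single (RB.B N) (1 : ℂ) + q 0 • single (RB.C N) (1 : ℂ)) := by
    match_scalars <;> ring
  rw [← this]
  have e1 : q 0 * (2 * p 0) + q 1 * (2 * p 1) = 0 := by linear_combination 2 * h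
  have e2 : q 0 * (-(q 1)) + q 1 * q 0 = 0 := by ring
  rw [e1, e2, zero_smul, zero_smul, add_zero]

lemma coeff2 {b1 b2 : RB} (hne : b1 ≠ b2) {a c : ℂ}
    (hz : a • single b1 (1 : ℂ) + c • single b2 (1 : ℂ) = 0) : a = 0 ∧ c = 0 := by
  constructor
  · have := DFunLike.congr_fun hz b1
    simpa [Finsupp.single_eq_same, Finsupp.single_eq_of_ne' hne.symm] using this
  · have := DFunLike.congr_fun hz b2
    simpa [Finsupp.single_eq_same, Finsupp.single_eq_of_ne' hne] using this

lemma deg_set_one : {b : RB | RB.deg b = 1} = {RB.A 0 0, RB.A 0 1} := by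
  ext b
  simp only [Set.mem_setOf_eq, Set.mem_insert_iff, Set.mem_singleton_iff]
  cases b with
  | A N mu => fin_cases mu <;> simp [RB.deg] <;> try omega
  | B N => simp [RB.deg]; try omega
  | C N => simp [RB.deg]; try omega

lemma deg_set_two : {b : RB | RB.deg b = 2} = {RB.B 0, RB.C 0} := by
  ext b
  simp only [Set.mem_setOf_eq, Set.mem_insert_iff, Set.mem_singleton_iff]
  cases b with
  | A N mu => fin_cases mu <;> simp [RB.deg] <;> try omega
  | B N => simp [RB.deg]; try omega
  | C N => simp [RB.deg]; try omega

lemma deg_set_zero : {b : RB | RB.deg b = 0} = ∅ := by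
  ext b
  simp only [Set.mem_setOf_eq, Set.mem_empty_iff_false, iff_false]
  cases b <;> simp [RB.deg] <;> try omega

lemma deg_set_neg : {b : RB | RB.deg b = -1} = ∅ := by
  ext b
  simp only [Set.mem_setOf_eq, Set.mem_empty_iff_false, iff_false]
  cases b <;> simp [RB.deg] <;> try omega

lemma Rdeg_zero : Rdeg 0 = ⊥ := by
  rw [Rdeg, deg_set_zero, Finsupp.supported_empty]

lemma Rdeg_neg : Rdeg (-1) = ⊥ := by
  rw [Rdeg, deg_set_neg, Finsupp.supported_empty]

lemma Rdeg_one_span :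
    Rdeg 1 = Submodule.span ℂ {single (RB.A 0 0) (1 : ℂ), single (RB.A 0 1) 1} := by
  rw [Rdeg, Finsupp.supported_eq_span_single, deg_set_one, Set.image_insert_eq,
    Set.image_singleton]

lemma Rdeg_two_span :
    Rdeg 2 = Submodule.span ℂ {single (RB.B 0) (1 : ℂ), single (RB.C 0) 1} := by
  rw [Rdeg, Finsupp.supported_eq_span_single, deg_set_two, Set.image_insert_eq,
    Set.image_singleton]

lemma mem_Rdeg_one {x : RSpace} (hx : x ∈ Rdeg 1) :
    ∃ a b : ℂ, x = a • single (RB.A 0 0) (1 : ℂ) + b • single (RB.A 0 1) 1 := by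
  rw [Rdeg_one_span] at hx
  rcases Submodule.mem_span_pair.mp hx with ⟨a, b, hab⟩
  exact ⟨a, b, hab.symm⟩

lemma mem_Rdeg_two {x : RSpace} (hx : x ∈ Rdeg 2) :
    ∃ a b : ℂ, x = a • single (RB.B 0) (1 : ℂ) + b • single (RB.C 0) 1 := by
  rw [Rdeg_two_span] at hx
  rcases Submodule.mem_span_pair.mp hx with ⟨a, b, hab⟩
  exact ⟨a, b, hab.symm⟩

lemma Rdeg_one_mem (a b : ℂ) :
    a • single (RB.A 0 0) (1 : ℂ) + b • single (RB.A 0 1) 1 ∈ Rdeg 1 := by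
  rw [Rdeg_one_span]
  exact Submodule.mem_span_pair.mpr ⟨a, b, rfl⟩

lemma Rdeg_two_mem (a b : ℂ) :
    a • single (RB.B 0) (1 : ℂ) + b • single (RB.C 0) 1 ∈ Rdeg 2 := by
  rw [Rdeg_two_span]
  exact Submodule.mem_span_pair.mpr ⟨a, b, rfl⟩

lemma qA_mem_Rdeg_one (q : Fin 2 → ℂ) : qA q 0 ∈ Rdeg 1 := by
  rw [qA]; exact Rdeg_one_mem _ _

lemma q_nz {q : Fin 2 → ℂ} (hq : q ≠ 0) : q 0 ≠ 0 ∨ q 1 ≠ 0 := by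
  by_contra hc
  push_neg at hc
  exact hq (funext fun mu => by fin_cases mu <;> simp [hc.1, hc.2])

lemma qA_ne_zero {q : Fin 2 → ℂ} (hq : q ≠ 0) (N : ℕ) : qA q N ≠ 0 := by
  intro hzero
  rw [qA] at hzero
  obtain ⟨h0, h1⟩ := coeff2 (by simp) hzero
  rcases q_nz hq with h | h <;> [exact h h0; exact h h1]

lemma QAb_apply (p q : Fin 2 → ℂ) (x y : RSpace) :
    QAb p q (x, y) = (Qmap p q x - (4 : ℂ) • Smap y, - Qmap p q y) := by
  simp [QAb]

lemma AbDeg_zero : AbDeg 0 = ⊥ := by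
  rw [AbDeg]
  have e : (0 : ℤ) - 1 = -1 := by norm_num
  rw [e, Rdeg_zero, Rdeg_neg]
  ext z
  simp [Submodule.mem_prod, Prod.ext_iff]

lemma AbB_one (p q : Fin 2 → ℂ) : AbB p q 1 = ⊥ := by
  rw [AbB]
  have e : (1 : ℤ) - 1 = 0 := by norm_num
  rw [e, AbDeg_zero, Submodule.map_bot]

lemma Z1_struct {p q : Fin 2 → ℂ} (hq : q ≠ 0) {x : RSpace}
    (hx : x ∈ Rdeg 1) (hker : Qmap p q x = 0) : ∃ c : ℂ, x = c • qA q 0 := by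
  obtain ⟨a, b, rfl⟩ := mem_Rdeg_one hx
  rw [Q_one] at hker
  obtain ⟨h1, h2⟩ := coeff2 (by simp) hker
  rcases q_nz hq with h0 | h0
  · refine ⟨a / q 0, ?_⟩
    rw [qA]
    match_scalars
    · field_simp
    · field_simp
      linear_combination h2
  · refine ⟨b / q 1, ?_⟩
    rw [qA]
    match_scalars
    · field_simp
      linear_combination -h2
    · field_simp


lemma Q_two (p q : Fin 2 → ℂ) (β γ : ℂ) :
    Qmap p q (β • single (RB.B 0) (1 : ℂ) + γ • single (RB.C 0) 1)
      = (β * q 0 - 2 * γ * p 1) • single (RB.A 1 0) (1 : ℂ)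
        + (β * q 1 + 2 * γ * p 0) • single (RB.A 1 1) 1 := by
  rw [map_add, map_smul, map_smul, QB, QC]
  match_scalars <;> ring

lemma S_one (a b : ℂ) :
    Smap (a • single (RB.A 0 0) (1 : ℂ) + b • single (RB.A 0 1) 1)
      = a • single (RB.A 1 0) (1 : ℂ) + b • single (RB.A 1 1) 1 := by
  rw [map_add, map_smul, map_smul, S_single, S_single]; rfl

lemma AbDeg_one_eq : AbDeg 1 = (Rdeg 1).prod (Rdeg 0) := by
  rw [AbDeg]; norm_num

lemma AbDeg_two_eq : AbDeg 2 = (Rdeg 2).prod (Rdeg 1) := by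
  rw [AbDeg]; norm_num

lemma AbB_two_eq (p q : Fin 2 → ℂ) : AbB p q 2 = (AbDeg 1).map (QAb p q) := by
  rw [AbB]; norm_num

lemma AbB_two_snd {p q : Fin 2 → ℂ} {z : AbSpace} (hz : z ∈ AbB p q 2) : z.2 = 0 := by
  rw [AbB_two_eq] at hz
  rcases hz with ⟨w, hw, rfl⟩
  rw [AbDeg_one_eq] at hw
  simp only [SetLike.mem_coe, Submodule.mem_prod, Rdeg_zero] at hw
  have h2 : w.2 = 0 := hw.2
  have : QAb p q w = QAb p q (w.1, w.2) := by rw [Prod.mk.eta]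
  rw [this, QAb_apply, h2, map_zero]
  simp

/-- Coboundary witness at degree two. -/
lemma mem_AbB_two {p q : Fin 2 → ℂ} (a b : ℂ) :
    QAb p q (a • single (RB.A 0 0) (1 : ℂ) + b • single (RB.A 0 1) 1, 0)
      ∈ AbB p q 2 := by
  rw [AbB_two_eq]
  exact ⟨_, by rw [AbDeg_one_eq]; simp only [SetLike.mem_coe, Submodule.mem_prod]; exact ⟨Rdeg_one_mem a b, zero_mem _⟩, rfl⟩

lemma Z2_struct {p q : Fin 2 → ℂ} (hq : q ≠ 0) {z : AbSpace} (hz : z ∈ AbZ p q 2) :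
    ∃ t : ℂ, z - t • (((4 : ℂ) • single (RB.B 0) (1 : ℂ), qA q 0) : AbSpace)
      ∈ AbB p q 2 := by
  obtain ⟨x, y⟩ := z
  obtain ⟨hdeg, hker⟩ := hz
  rw [AbDeg_two_eq] at hdeg
  simp only [SetLike.mem_coe, Submodule.mem_prod] at hdeg
  obtain ⟨β, γ, rfl⟩ := mem_Rdeg_two hdeg.1
  obtain ⟨a, b, rfl⟩ := mem_Rdeg_one hdeg.2
  simp only [SetLike.mem_coe, LinearMap.mem_ker] at hker
  rw [QAb_apply, Q_two, S_one, Q_one, Prod.ext_iff] at hker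
  obtain ⟨hk1, hk2⟩ := hker
  simp only [Prod.fst_zero, Prod.snd_zero] at hk1 hk2
  have hk1' : (β * q 0 - 2 * γ * p 1 - 4 * a) • single (RB.A 1 0) (1 : ℂ)
      + (β * q 1 + 2 * γ * p 0 - 4 * b) • single (RB.A 1 1) 1 = 0 := by
    rw [← hk1]; match_scalars <;> ring
  obtain ⟨r1, r2⟩ := coeff2 (by simp) hk1'
  obtain ⟨k1, k2⟩ := coeff2 (by simp) (neg_eq_zero.mp hk2)
  have hp : ∀ (X Y U V : RSpace) (c : ℂ),
      ((X, Y) : AbSpace) - c • ((U, V) : AbSpace) = (X - c • U, Y - c • V) := by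
    intro X Y U V c; rfl
  rcases q_nz hq with h0 | h0
  · refine ⟨a / q 0, ?_⟩
    have hmem := mem_AbB_two (p := p) (q := q) 0 (γ / q 0)
    rw [QAb_apply, map_zero, smul_zero, sub_zero, map_zero, neg_zero, Q_one] at hmem
    have heq : ((β • single (RB.B 0) (1 : ℂ) + γ • single (RB.C 0) 1,
          a • single (RB.A 0 0) (1 : ℂ) + b • single (RB.A 0 1) 1) : AbSpace)
        - (a / q 0) • (((4 : ℂ) • single (RB.B 0) (1 : ℂ), qA q 0) : AbSpace)
        = ((2 * 0 * p 0 + 2 * (γ / q 0) * p 1) • single (RB.B 0) (1 : ℂ)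
            + (γ / q 0 * q 0 - 0 * q 1) • single (RB.C 0) 1, 0) := by
      rw [hp, qA, Prod.mk.injEq]
      constructor
      · match_scalars <;> field_simp
        all_goals (first
          | linear_combination r1 | linear_combination -r1
          | linear_combination r2 | linear_combination -r2
          | linear_combination k2 | linear_combination -k2 | ring)
      · match_scalars <;> field_simp
        all_goals (first
          | linear_combination r1 | linear_combination -r1
          | linear_combination r2 | linear_combination -r2
          | linear_combination k2 | linear_combination -k2 | ring)
    rw [heq]; exact hmem
  · refine ⟨b / q 1, ?_⟩
    have hmem := mem_AbB_two (p := p) (q := q) (-(γ / q 1)) 0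
    rw [QAb_apply, map_zero, smul_zero, sub_zero, map_zero, neg_zero, Q_one] at hmem
    have heq : ((β • single (RB.B 0) (1 : ℂ) + γ • single (RB.C 0) 1,
          a • single (RB.A 0 0) (1 : ℂ) + b • single (RB.A 0 1) 1) : AbSpace)
        - (b / q 1) • (((4 : ℂ) • single (RB.B 0) (1 : ℂ), qA q 0) : AbSpace)
        = ((2 * (-(γ / q 1)) * p 0 + 2 * 0 * p 1) • single (RB.B 0) (1 : ℂ)
            + (0 * q 0 - (-(γ / q 1)) * q 1) • single (RB.C 0) 1, 0) := by
      rw [hp, qA, Prod.mk.injEq]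
      constructor
      · match_scalars <;> field_simp
        all_goals (first
          | linear_combination r1 | linear_combination -r1
          | linear_combination r2 | linear_combination -r2
          | linear_combination k2 | linear_combination -k2 | ring)
      · match_scalars <;> field_simp
        all_goals (first
          | linear_combination r1 | linear_combination -r1
          | linear_combination r2 | linear_combination -r2
          | linear_combination k2 | linear_combination -k2 | ring)
    rw [heq]; exact hmem

/-- Assume `p·q = 0` and `q ≠ 0`.  Then the absolute BRST
cohomology of `Ab(p,q)` at ghost number one is one-dimensional, spanned by the
class of `q·A_0 = q₀ A_0^0 + q₁ A_0^1`, and at ghost number two it is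
one-dimensional, spanned by the class of `c₀(q·A_0) + 4 B_0` (in particular
this state is `Q`-closed because `Q(c₀ q·A_0) = −4 q·A_1 = −4 Q B_0` — the
first two conjuncts below — and it is not `Q`-exact). -/
theorem absolute_cohomology_ghost_one_two (p q : Fin 2 → ℂ)
    (h : p 0 * q 0 + p 1 * q 1 = 0) (hq : q ≠ 0)
    (hm1 : (AbB p q 1).mkQ ((qA q 0, 0) : AbSpace) ∈ HAb p q 1)
    (hm2 : (AbB p q 2).mkQ
        (((4 : ℂ) • Finsupp.single (RB.B 0) (1 : ℂ), qA q 0) : AbSpace)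
      ∈ HAb p q 2) :
    (QAb p q ((0, qA q 0) : AbSpace) = (((-4 : ℂ) • qA q 1, 0) : AbSpace))
    ∧ (Qmap p q (Finsupp.single (RB.B 0) (1 : ℂ)) = qA q 1)
    ∧ (((qA q 0, 0) : AbSpace) ∈ AbZ p q 1)
    ∧ ((((4 : ℂ) • Finsupp.single (RB.B 0) (1 : ℂ), qA q 0) : AbSpace)
        ∈ AbZ p q 2)
    ∧ (Submodule.span ℂ
        {(⟨(AbB p q 1).mkQ ((qA q 0, 0) : AbSpace), hm1⟩ : ↥(HAb p q 1))} = ⊤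
      ∧ (⟨(AbB p q 1).mkQ ((qA q 0, 0) : AbSpace), hm1⟩ : ↥(HAb p q 1)) ≠ 0)
    ∧ (Submodule.span ℂ
        {(⟨(AbB p q 2).mkQ
            (((4 : ℂ) • Finsupp.single (RB.B 0) (1 : ℂ), qA q 0) : AbSpace),
          hm2⟩ : ↥(HAb p q 2))} = ⊤
      ∧ (⟨(AbB p q 2).mkQ
            (((4 : ℂ) • Finsupp.single (RB.B 0) (1 : ℂ), qA q 0) : AbSpace),
          hm2⟩ : ↥(HAb p q 2)) ≠ 0) := by
  have hS : Smap (qA q 0) = qA q 1 := S_qA q 0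
  have hQqA0 : Qmap p q (qA q 0) = 0 := Q_qA p q h 0
  have c1 : QAb p q ((0, qA q 0) : AbSpace) = (((-4 : ℂ) • qA q 1, 0) : AbSpace) := by
    rw [QAb_apply, map_zero, hS, hQqA0, neg_zero, zero_sub, Prod.mk.injEq]
    exact ⟨by match_scalars <;> ring, rfl⟩
  have c2 : Qmap p q (Finsupp.single (RB.B 0) (1 : ℂ)) = qA q 1 := QB_eq_qA p q 0
  have c3 : ((qA q 0, 0) : AbSpace) ∈ AbZ p q 1 := by
    refine Submodule.mem_inf.mpr ⟨?_, ?_⟩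
    · rw [AbDeg_one_eq]
      exact Submodule.mem_prod.mpr ⟨qA_mem_Rdeg_one q, zero_mem _⟩
    · rw [LinearMap.mem_ker, QAb_apply, map_zero, map_zero, smul_zero, sub_zero,
        hQqA0, neg_zero]
      rfl
  have hB0mem : (4 : ℂ) • Finsupp.single (RB.B 0) (1 : ℂ) ∈ Rdeg 2 := by
    refine Submodule.smul_mem _ _ ?_
    rw [Rdeg_two_span]
    exact Submodule.subset_span (by simp)
  have c4 : (((4 : ℂ) • Finsupp.single (RB.B 0) (1 : ℂ), qA q 0) : AbSpace)
      ∈ AbZ p q 2 := by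
    refine Submodule.mem_inf.mpr ⟨?_, ?_⟩
    · rw [AbDeg_two_eq]
      exact Submodule.mem_prod.mpr ⟨hB0mem, qA_mem_Rdeg_one q⟩
    · rw [LinearMap.mem_ker, QAb_apply, map_smul, QB_eq_qA, hS, hQqA0, neg_zero,
        sub_self]
      rfl
  refine ⟨c1, c2, c3, c4, ⟨?_, ?_⟩, ⟨?_, ?_⟩⟩
  · -- span at ghost number one
    rw [Submodule.eq_top_iff']
    rintro ⟨w, hw⟩
    obtain ⟨z, hz, rfl⟩ := hw
    obtain ⟨hzdeg, hzker⟩ := Submodule.mem_inf.mp hz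
    rw [AbDeg_one_eq] at hzdeg
    obtain ⟨hz1, hz2⟩ := Submodule.mem_prod.mp hzdeg
    rw [Rdeg_zero, Submodule.mem_bot] at hz2
    have hq1 : Qmap p q z.1 = 0 := by
      have hk := hzker
      rw [LinearMap.mem_ker, show z = (z.1, z.2) from rfl, QAb_apply, hz2, map_zero,
        smul_zero, sub_zero, map_zero, neg_zero, Prod.ext_iff] at hk
      simpa using hk.1
    obtain ⟨c, hc⟩ := Z1_struct hq hz1 hq1
    refine Submodule.mem_span_singleton.mpr ⟨c, ?_⟩
    apply Subtype.ext
    show c • (AbB p q 1).mkQ ((qA q 0, 0) : AbSpace) = (AbB p q 1).mkQ z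
    rw [← map_smul]
    congr 1
    have : z = (z.1, z.2) := rfl
    rw [this, hc, hz2, Prod.smul_mk, smul_zero]
  · -- nonvanishing at ghost number one
    intro he
    have h0 := congrArg Subtype.val he
    simp only [ZeroMemClass.coe_zero] at h0
    rw [Submodule.mkQ_apply, Submodule.Quotient.mk_eq_zero, AbB_one,
      Submodule.mem_bot, Prod.mk.injEq] at h0
    exact qA_ne_zero hq 0 h0.1
  · -- span at ghost number two
    rw [Submodule.eq_top_iff']
    rintro ⟨w, hw⟩
    obtain ⟨z, hz, rfl⟩ := hw
    obtain ⟨t, hmem⟩ := Z2_struct hq hz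
    refine Submodule.mem_span_singleton.mpr ⟨t, ?_⟩
    apply Subtype.ext
    show t • (AbB p q 2).mkQ _ = (AbB p q 2).mkQ z
    rw [← map_smul]
    rw [Submodule.mkQ_apply, Submodule.mkQ_apply, Submodule.Quotient.eq]
    simpa using neg_mem hmem
  · -- nonvanishing at ghost number two
    intro he
    have h0 := congrArg Subtype.val he
    simp only [ZeroMemClass.coe_zero] at h0
    rw [Submodule.mkQ_apply, Submodule.Quotient.mk_eq_zero] at h0
    have := AbB_two_snd h0
    exact qA_ne_zero hq 0 this
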